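/- Every natural number n with 0 ≤ n < L_k (k ≥ 1) can be written as n = Σ_{i=0}^{k−1} α_i L_i with α_i ∈ {0,1}, α_i α_{i+1} = 0 for all i, and α_0 α_2 = 0. -/

import Mathlib

def lucas : ℕ → ℕ
  | 0 => 2
  | 1 => 1
  | (n + 2) => lucas (n + 1) + lucas n

theorem lucas_aux : ∀ k, 1 ≤ k → ∀ n, n < lucas k →
    ∃ α : ℕ → ℕ,
      (∀ i, α i ≤ 1) ∧
      (∀ i, α i * α (i + 1) = 0) ∧
      α 0 * α 2 = 0 ∧
      (∀ i, k ≤ i → α i = 0) ∧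
      n = ∑ i ∈ Finset.range k, α i * lucas i := by
  intro k
  induction k using Nat.strong_induction_on with
  | _ k ih =>
    match k with
    | 0 => intro h; omega
    | 1 =>
      intro _ n hn
      have h1 : lucas 1 = 1 := rfl
      rw [h1] at hn
      interval_cases n
      exact ⟨fun _ => 0, by simp, by simp, by simp, by simp, by simp⟩
    | 2 =>
      intro _ n hn
      have h2 : lucas 2 = 3 := rfl
      rw [h2] at hn
      interval_cases n
      · exact ⟨fun _ => 0, by simp, by simp, by simp, by simp, by simp⟩
      · refine ⟨fun i => if i = 1 then 1 else 0, ?_, ?_, ?_, ?_, ?_⟩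
        · intro i; dsimp only; split <;> simp
        · intro i; rcases eq_or_ne i 1 with h | h <;> simp [h]
        · simp
        · intro i hi; simp; omega
        · simp [Finset.sum_range_succ, lucas]
      · refine ⟨fun i => if i = 0 then 1 else 0, ?_, ?_, ?_, ?_, ?_⟩
        · intro i; dsimp only; split <;> simp
        · intro i; rcases eq_or_ne i 0 with h | h <;> simp [h]
        · simp
        · intro i hi; simp; omega
        · simp [Finset.sum_range_succ, lucas]
    | (k+3) =>
      intro _ n hn
      have hrec : lucas (k+3) = lucas (k+2) + lucas (k+1) := rfl
      by_cases h : n < lucas (k+2)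
      · obtain ⟨α, h1, h2, h3, h4, h5⟩ := ih (k+2) (by omega) (by omega) n h
        refine ⟨α, h1, h2, h3, fun i hi => h4 i (by omega), ?_⟩
        rw [Finset.sum_range_succ, h4 (k+2) le_rfl]
        simpa using h5
      · push_neg at h
        obtain ⟨β, h1, h2, h3, h4, h5⟩ :=
          ih (k+1) (by omega) (by omega) (n - lucas (k+2)) (by omega)
        refine ⟨fun i => if i = k+2 then 1 else β i, ?_, ?_, ?_, ?_, ?_⟩
        · intro i; dsimp only; split <;> simp [h1 i]
        · intro i
          rcases eq_or_ne i (k+2) with hi | hi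
        <;> rcases eq_or_ne (i+1) (k+2) with hi' | hi'
          · omega
          · simpa [hi, hi'] using h4 (i+1) (by omega)
          · simp [hi, hi', h4 i (by omega)]
          · simp [hi, hi', show i ≠ k+1 by omega, h2 i]
        · rcases eq_or_ne k 0 with hk0 | hk0
          · subst hk0
            have hb0 : β 0 = 0 := by
              have h5' : n - lucas 2 = β 0 * 2 := by
                simpa [Finset.sum_range_one, show lucas 0 = 2 from rfl] using h5
              have hn' : n < 4 := by simpa [show lucas 3 = 4 from rfl] using hn
              have h' : 3 ≤ n := by simpa [show lucas 2 = 3 from rfl] using h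
              have hl2 : lucas 2 = 3 := rfl
              omega
            simp [hb0]
          · have e0 : (0:ℕ) ≠ k+2 := by omega
            have e2 : (2:ℕ) ≠ k+2 := by omega
            dsimp only
            rw [if_neg e0, if_neg e2]
            exact h3
        · intro i hi
          simp only [show i ≠ k+2 by omega, if_false]
          exact h4 i (by omega)
        · rw [Finset.sum_range_succ]
          have hone : (fun i => if i = k+2 then 1 else β i) (k+2) = 1 := by simp
          rw [hone, one_mul]
          have hsum : ∑ i ∈ Finset.range (k+2),
              (if i = k+2 then 1 else β i) * lucas i
              = ∑ i ∈ Finset.range (k+2), β i * lucas i := by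
            apply Finset.sum_congr rfl
            intro i hi
            simp only [Finset.mem_range] at hi
            simp [show i ≠ k+2 by omega]
          rw [hsum, Finset.sum_range_succ, h4 (k+1) le_rfl]
          simp only [zero_mul, add_zero]
          omega

theorem lucas_zeckendorf_existence (k : ℕ) (hk : 1 ≤ k) (n : ℕ) (hn : n < lucas k) :
    ∃ α : ℕ → ℕ,
      (∀ i, α i ≤ 1) ∧
      (∀ i, α i * α (i + 1) = 0) ∧
      α 0 * α 2 = 0 ∧
      n = ∑ i ∈ Finset.range k, α i * lucas i := by
  obtain ⟨α, h1, h2, h3, _, h5⟩ := lucas_aux k hk n hn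
  exact ⟨α, h1, h2, h3, h5⟩
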